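/- The annihilator of a finitely generated projective module over a commutative ring is generated by an idempotent element. -/
import Mathlib

/-- The annihilator of a finitely generated projective module over a commutative
ring is generated by an idempotent element. -/
theorem annihilator_eq_span_idempotent_of_fg_projective
    (R M : Type*) [CommRing R] [AddCommGroup M] [Module R M]
    [Module.Finite R M] [Module.Projective R M] :
    ∃ e : R, IsIdempotentElem e ∧ Module.annihilator R M = Ideal.span {e} := by
  classical
  obtain ⟨n, f, hf⟩ := Module.Finite.exists_fin' R M
  obtain ⟨g, hg⟩ := Module.projective_lifting_property f (LinearMap.id) hf
  set p : (Fin n → R) →ₗ[R] (Fin n → R) := g.comp f with hp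
  have hpp : ∀ x, p (p x) = p x := by
    intro x
    show g (f (g (f x))) = g (f x)
    have : f (g (f x)) = f x := congrArg (fun h => h (f x)) (congrArg DFunLike.coe hg)
    rw [this]
  have hfp : ∀ x, f (p x) = f x := by
    intro x
    show f (g (f x)) = f x
    exact congrArg (fun h => h (f x)) (congrArg DFunLike.coe hg)
  -- matrix entries of p
  set a : Fin n → Fin n → R := fun i j => p (fun k => if i = k then 1 else 0) j with ha
  set I : Ideal R := Ideal.span (Set.range fun ij : Fin n × Fin n => a ij.1 ij.2) with hI
  have hgen : ∀ i j, a i j ∈ I := fun i j =>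
    Ideal.subset_span ⟨(i, j), rfl⟩
  have hIfg : I.FG := Submodule.fg_span (Set.finite_range _)
  -- key expansion: (p x) j = ∑ k, x k * a k j
  have hexp : ∀ (x : Fin n → R) (j : Fin n), p x j = ∑ k, x k * a k j := by
    intro x j
    have := LinearMap.pi_apply_eq_sum_univ p x
    have := congrArg (fun y : Fin n → R => y j) this
    simpa [a, Finset.sum_apply, smul_eq_mul] using this
  -- p x has all entries in I
  have hpxI : ∀ (x : Fin n → R) (j : Fin n), p x j ∈ I := by
    intro x j
    rw [hexp]
    exact Ideal.sum_mem _ fun k _ => Ideal.mul_mem_left _ _ (hgen k j)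
  -- I is idempotent
  have hI2 : IsIdempotentElem I := by
    have hle : I ≤ I * I := by
      rw [hI, Ideal.span_le]
      rintro _ ⟨⟨i, j⟩, rfl⟩
      show a i j ∈ I * I
      have hij : a i j = ∑ k, a i k * a k j := by
        have h1 : a i j = p (p (fun k => if i = k then 1 else 0)) j := by
          rw [hpp]
        rw [h1, hexp]
      rw [hij]
      exact Ideal.sum_mem _ fun k _ => Ideal.mul_mem_mul (hgen i k) (hgen k j)
    exact le_antisymm Ideal.mul_le_left hle
  obtain ⟨e, he, hIe⟩ := (Ideal.isIdempotentElem_iff_of_fg I hIfg).mp hI2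
  -- e acts as identity on I
  have heI : e ∈ I := by rw [hIe]; exact Submodule.mem_span_singleton_self e
  have hact : ∀ x ∈ I, e * x = x := by
    intro x hx
    rw [hIe] at hx
    obtain ⟨c, rfl⟩ := Submodule.mem_span_singleton.mp hx
    simp only [smul_eq_mul]
    rw [mul_comm e, mul_assoc, he.eq]
  refine ⟨1 - e, he.one_sub, ?_⟩
  · apply le_antisymm
    · intro r hr
      rw [Module.mem_annihilator] at hr
      -- r kills all a i j
      have hra : ∀ i j, r * a i j = 0 := by
        intro i j
        have h0 : r • f (fun k => if i = k then 1 else 0) = 0 := hr _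
        have : r • p (fun k => if i = k then 1 else 0) = 0 := by
          show r • g (f _) = 0
          rw [← map_smul, h0, map_zero]
        exact congrArg (fun y : Fin n → R => y j) this
      have hre : r * e = 0 := by
        have : e ∈ I := heI
        refine Submodule.span_induction ?_ ?_ ?_ ?_ this
        · rintro _ ⟨⟨i, j⟩, rfl⟩; exact hra i j
        · exact mul_zero r
        · intro x y _ _ hx hy; rw [mul_add, hx, hy, add_zero]
        · intro c x _ hx; rw [smul_eq_mul, mul_comm c, ← mul_assoc, hx, zero_mul]
      rw [Ideal.mem_span_singleton]
      exact ⟨r, by rw [sub_mul, one_mul, mul_comm e r, hre, sub_zero]⟩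
    · rw [Ideal.span_le, Set.singleton_subset_iff, SetLike.mem_coe, Module.mem_annihilator]
      intro m
      obtain ⟨x, rfl⟩ := hf m
      have h1 : f x = f (p x) := (hfp x).symm
      have h2 : e • p x = p x := by
        funext j
        simpa [smul_eq_mul] using hact (p x j) (hpxI x j)
      rw [h1, sub_smul, one_smul, ← map_smul, h2, sub_self]
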